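/- Suppose z₀, …, zₙ ∈ ℝⁿ, ω ∈ ℝⁿ, and constants 0 < C₁ < r and C₂ > 0 satisfy: r − C₁ < ‖zₖ − ω‖ < r + C₁ for all 0 ≤ k ≤ n, and the matrix V with rows vₖ = z_{k−1} − zₙ (1 ≤ k ≤ n) is invertible with ‖V⁻¹‖ ≤ C₂. Then the points z₀, …, zₙ admit a circumscribed sphere with center ω* = (1/2)·V⁻¹·λ(V) + zₙ satisfying ‖ω − ω*‖ < 2√n · r · C₁ · C₂. -/

import Mathlib

open scoped Matrix

/-- Suppose `z₀, …, zₙ ∈ ℝⁿ`, `ω ∈ ℝⁿ` and constants `0 < C₁ < r`, `C₂ > 0` satisfy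
`r − C₁ < ‖zₖ − ω‖ < r + C₁` for all `k`, and the matrix `V` with rows
`vₖ = z_{k−1} − zₙ` is invertible with `‖V⁻¹‖ ≤ C₂`.  Then the points admit a
circumscribed sphere with center `ω* = (1/2)·V⁻¹·λ(V) + zₙ` and `‖ω − ω*‖ < 2√n·r·C₁·C₂`. -/
theorem stmt_7 (n : ℕ) (z : Fin (n + 1) → EuclideanSpace ℝ (Fin n))
    (ω : EuclideanSpace ℝ (Fin n)) (r C₁ C₂ : ℝ)
    (hC₁ : 0 < C₁) (hC₁r : C₁ < r) (hC₂ : 0 < C₂)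
    (V : Matrix (Fin n) (Fin n) ℝ)
    (hV : ∀ k j, V k j = z k.castSucc j - z (Fin.last n) j)
    (hdet : IsUnit V.det)
    (hVinv : ‖Matrix.toEuclideanCLM (𝕜 := ℝ) V⁻¹‖ ≤ C₂)
    (happrox : ∀ k, r - C₁ < ‖z k - ω‖ ∧ ‖z k - ω‖ < r + C₁) :
    ∃ ωstar : EuclideanSpace ℝ (Fin n),
      (∀ j, ωstar j = (1 / 2) *
          (V⁻¹ *ᵥ (fun k => ‖z k.castSucc - z (Fin.last n)‖ ^ 2)) j + z (Fin.last n) j) ∧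
      (∀ i j : Fin (n + 1), ‖ωstar - z i‖ = ‖ωstar - z j‖) ∧
      ‖ω - ωstar‖ < 2 * Real.sqrt n * r * C₁ * C₂ := by
  classical
  by_cases hn : n = 0
  · subst hn
    exfalso
    have h0 : z 0 - ω = 0 := PiLp.ext fun i => Fin.elim0 i
    have h1 := (happrox 0).1
    rw [h0] at h1
    simp at h1
    linarith
  have hn1 : 1 ≤ n := Nat.one_le_iff_ne_zero.mpr hn
  haveI : Nonempty (Fin n) := ⟨⟨0, hn1⟩⟩
  set N : Fin (n + 1) := Fin.last n with hN
  set lam : Fin n → ℝ := fun k => ‖z k.castSucc - z N‖ ^ 2 with hlam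
  set c : Fin n → ℝ := fun j => (1 / 2) * (V⁻¹ *ᵥ lam) j + z N j with hc
  set ωs : EuclideanSpace ℝ (Fin n) := (WithLp.equiv 2 (Fin n → ℝ)).symm c with hωs
  have hωsj : ∀ j, ωs j = (1 / 2) * (V⁻¹ *ᵥ lam) j + z N j := fun j => rfl
  have hVV : V *ᵥ (V⁻¹ *ᵥ lam) = lam := by
    rw [Matrix.mulVec_mulVec, Matrix.mul_nonsing_inv V hdet, Matrix.one_mulVec]
  have hinner : ∀ x y : EuclideanSpace ℝ (Fin n),
      (inner ℝ x y : ℝ) = ∑ j, x j * y j := by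
    intro x y
    simp [PiLp.inner_apply, RCLike.inner_apply, mul_comm]
  have hrow : ∀ (u : EuclideanSpace ℝ (Fin n)) (k : Fin n),
      (inner ℝ (z k.castSucc - z N) u : ℝ) = ∑ j, V k j * u j := by
    intro u k
    rw [hinner]
    refine Finset.sum_congr rfl fun j _ => ?_
    rw [hV k j]
    congr 1
  have hmulVec : ∀ (v : Fin n → ℝ) (k : Fin n), (V *ᵥ v) k = ∑ j, V k j * v j := by
    intro v k; simp [Matrix.mulVec, dotProduct]
  have hkey : ∀ k : Fin n, (inner ℝ (z k.castSucc - z N) (ωs - z N) : ℝ) = lam k / 2 := by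
    intro k
    rw [hrow]
    have hco : ∀ j, (ωs - z N) j = (1 / 2) * (V⁻¹ *ᵥ lam) j := by
      intro j
      have : (ωs - z N) j = ωs j - z N j := rfl
      rw [this, hωsj]; ring
    calc (∑ j, V k j * (ωs - z N) j) = ∑ j, (1 / 2) * (V k j * (V⁻¹ *ᵥ lam) j) := by
          refine Finset.sum_congr rfl fun j _ => ?_
          rw [hco j]; ring
      _ = (1 / 2) * (V *ᵥ (V⁻¹ *ᵥ lam)) k := by rw [← Finset.mul_sum, hmulVec]
      _ = lam k / 2 := by rw [hVV]; ring
  have heq : ∀ k : Fin n, ‖ωs - z k.castSucc‖ = ‖ωs - z N‖ := by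
    intro k
    have hsub : ωs - z k.castSucc = (ωs - z N) - (z k.castSucc - z N) := by abel
    have hlamk : ‖z k.castSucc - z N‖ ^ 2 = lam k := rfl
    have hsq : ‖ωs - z k.castSucc‖ ^ 2 = ‖ωs - z N‖ ^ 2 := by
      rw [hsub, norm_sub_sq_real, real_inner_comm, hkey k, hlamk]
      ring
    have := congrArg Real.sqrt hsq
    rwa [Real.sqrt_sq (norm_nonneg _), Real.sqrt_sq (norm_nonneg _)] at this
  have hall : ∀ i, ‖ωs - z i‖ = ‖ωs - z N‖ := by
    intro i
    refine Fin.lastCases rfl (fun k => heq k) i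
  -- coordinates of V applied to (ω - ωs)
  have hDcoord : ∀ k, ((Matrix.toEuclideanCLM (𝕜 := ℝ) V) (ω - ωs)) k
      = (‖z N - ω‖ ^ 2 - ‖z k.castSucc - ω‖ ^ 2) / 2 := by
    intro k
    have h1 : ((Matrix.toEuclideanCLM (𝕜 := ℝ) V) (ω - ωs)) k = ∑ j, V k j * (ω - ωs) j := by
      have h2 := congrFun (Matrix.ofLp_toEuclideanCLM (𝕜 := ℝ) V (ω - ωs)) k
      simpa [Matrix.toLin'_apply, hmulVec] using h2
    have h4 : (inner ℝ (z k.castSucc - z N) (ω - ωs) : ℝ)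
        = inner ℝ (z k.castSucc - z N) (ω - z N) - inner ℝ (z k.castSucc - z N) (ωs - z N) := by
      rw [← inner_sub_right]
      congr 1
      abel
    have h6 : ‖(z k.castSucc - z N) - (ω - z N)‖ ^ 2
        = ‖z k.castSucc - z N‖ ^ 2 - 2 * inner ℝ (z k.castSucc - z N) (ω - z N) + ‖ω - z N‖ ^ 2 :=
      norm_sub_sq_real _ _
    have hsub : (z k.castSucc - z N) - (ω - z N) = z k.castSucc - ω := by abel
    rw [hsub, norm_sub_rev ω (z N)] at h6
    have hlamk : ‖z k.castSucc - z N‖ ^ 2 = lam k := rfl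
    rw [hlamk] at h6
    have h5 : (inner ℝ (z k.castSucc - z N) (ω - z N) : ℝ)
        = (lam k + ‖z N - ω‖ ^ 2 - ‖z k.castSucc - ω‖ ^ 2) / 2 := by linarith
    rw [h1, ← hrow, h4, h5, hkey k]
    ring
  have hr : (0 : ℝ) < r := hC₁.trans hC₁r
  have h2rC : (0 : ℝ) < 2 * r * C₁ := by positivity
  have hbnd : ∀ k, |((Matrix.toEuclideanCLM (𝕜 := ℝ) V) (ω - ωs)) k| < 2 * r * C₁ := by
    intro k
    rw [hDcoord k, abs_lt]
    have h1 := happrox N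
    have h2 := happrox k.castSucc
    have hx : 0 ≤ ‖z N - ω‖ := norm_nonneg _
    have hy : 0 ≤ ‖z k.castSucc - ω‖ := norm_nonneg _
    constructor <;> nlinarith [h1.1, h1.2, h2.1, h2.2]
  have himg : ‖(Matrix.toEuclideanCLM (𝕜 := ℝ) V) (ω - ωs)‖ < Real.sqrt n * (2 * r * C₁) := by
    set w := (Matrix.toEuclideanCLM (𝕜 := ℝ) V) (ω - ωs) with hw
    rw [EuclideanSpace.norm_eq]
    have hsum : (∑ k, ‖w k‖ ^ 2) < n * (2 * r * C₁) ^ 2 := by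
      have hterm : ∀ k ∈ Finset.univ, ‖w k‖ ^ 2 < (2 * r * C₁) ^ 2 := by
        intro k _
        rw [Real.norm_eq_abs]
        exact pow_lt_pow_left₀ (hbnd k) (abs_nonneg _) two_ne_zero
      calc (∑ k, ‖w k‖ ^ 2) < ∑ _k : Fin n, (2 * r * C₁) ^ 2 :=
            Finset.sum_lt_sum_of_nonempty Finset.univ_nonempty hterm
        _ = n * (2 * r * C₁) ^ 2 := by simp [Finset.sum_const, mul_comm]
    calc Real.sqrt (∑ k, ‖w k‖ ^ 2) < Real.sqrt (n * (2 * r * C₁) ^ 2) :=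
          Real.sqrt_lt_sqrt (by positivity) hsum
      _ = Real.sqrt n * (2 * r * C₁) := by
          rw [Real.sqrt_mul (by positivity), Real.sqrt_sq h2rC.le]
  have hD : ∀ x : EuclideanSpace ℝ (Fin n),
      (Matrix.toEuclideanCLM (𝕜 := ℝ) V⁻¹) ((Matrix.toEuclideanCLM (𝕜 := ℝ) V) x) = x := by
    intro x
    have hone : Matrix.toEuclideanCLM (𝕜 := ℝ) V⁻¹ * Matrix.toEuclideanCLM (𝕜 := ℝ) V = 1 := by
      rw [← map_mul, Matrix.nonsing_inv_mul V hdet, map_one]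
    calc (Matrix.toEuclideanCLM (𝕜 := ℝ) V⁻¹) ((Matrix.toEuclideanCLM (𝕜 := ℝ) V) x)
        = (Matrix.toEuclideanCLM (𝕜 := ℝ) V⁻¹ * Matrix.toEuclideanCLM (𝕜 := ℝ) V) x := rfl
      _ = x := by rw [hone]; rfl
  have hfinal : ‖ω - ωs‖ < 2 * Real.sqrt n * r * C₁ * C₂ := by
    have h1 : ‖ω - ωs‖ ≤ C₂ * ‖(Matrix.toEuclideanCLM (𝕜 := ℝ) V) (ω - ωs)‖ := by
      calc ‖ω - ωs‖
          = ‖(Matrix.toEuclideanCLM (𝕜 := ℝ) V⁻¹) ((Matrix.toEuclideanCLM (𝕜 := ℝ) V) (ω - ωs))‖ := by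
            rw [hD]
        _ ≤ ‖Matrix.toEuclideanCLM (𝕜 := ℝ) V⁻¹‖ *
              ‖(Matrix.toEuclideanCLM (𝕜 := ℝ) V) (ω - ωs)‖ :=
            ContinuousLinearMap.le_opNorm _ _
        _ ≤ C₂ * ‖(Matrix.toEuclideanCLM (𝕜 := ℝ) V) (ω - ωs)‖ := by gcongr
    have h2 : C₂ * ‖(Matrix.toEuclideanCLM (𝕜 := ℝ) V) (ω - ωs)‖
        < C₂ * (Real.sqrt n * (2 * r * C₁)) := by
      exact mul_lt_mul_of_pos_left himg hC₂
    have h3 : C₂ * (Real.sqrt n * (2 * r * C₁)) = 2 * Real.sqrt n * r * C₁ * C₂ := by ring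
    linarith
  exact ⟨ωs, hωsj, fun i j => (hall i).trans (hall j).symm, hfinal⟩
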